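/- Let E be a real Hilbert space, let φ : E → ℝ be differentiable with β-Lipschitz gradient (β > 0), and let h : E → ℝ be convex. Set f = φ + h. Fix X, X̃, V ∈ E, a step size η ∈ (0,1], an arbitrary vector w ∈ E (a gradient estimate), and δ ≥ 0. Define ψ(U) := ‖U − X + (1/(2βη))·w‖² + (1/(βη))·h(U). If ψ(V) ≤ ψ(X̃) + δ and X⁺ := (1−η)X + ηV, then f(X⁺) ≤ (1−η)f(X) + η(φ(X) + h(X̃)) + (1/(2β))‖∇φ(X) − w‖² + η⟨X̃ − X, w⟩ + βη²‖X̃ − X‖² + βη²δ. -/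

import Mathlib

open Set

lemma descent_aux {E : Type*} [NormedAddCommGroup E] [InnerProductSpace ℝ E] [CompleteSpace E]
    (φ : E → ℝ) (β : ℝ)
    (hφdiff : Differentiable ℝ φ)
    (hφlip : ∀ x y : E, ‖gradient φ x - gradient φ y‖ ≤ β * ‖x - y‖)
    (x y : E) :
    φ y ≤ φ x + (inner ℝ (gradient φ x) (y - x) : ℝ) + β / 2 * ‖y - x‖ ^ 2 := by
  set d := y - x with hd
  set g : ℝ → ℝ := fun t => φ (x + t • d) - t * (inner ℝ (gradient φ x) d : ℝ)
    - β * t ^ 2 / 2 * ‖d‖ ^ 2 with hg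
  have hderiv : ∀ t : ℝ, HasDerivAt g
      ((inner ℝ (gradient φ (x + t • d)) d : ℝ) - (inner ℝ (gradient φ x) d : ℝ) - β * t * ‖d‖ ^ 2) t := by
    intro t
    have hc : HasDerivAt (fun t : ℝ => x + t • d) d t := by
      simpa using ((hasDerivAt_id t).smul_const d).const_add x
    have h1 : HasDerivAt (fun t : ℝ => φ (x + t • d))
        ((inner ℝ (gradient φ (x + t • d)) d : ℝ)) t := by
      have := ((hφdiff (x + t • d)).hasGradientAt.hasFDerivAt).comp_hasDerivAt t hc
      simpa [InnerProductSpace.toDual_apply_apply, Function.comp_def] using this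
    have h2 : HasDerivAt (fun t : ℝ => t * (inner ℝ (gradient φ x) d : ℝ))
        ((inner ℝ (gradient φ x) d : ℝ)) t := by
      simpa using (hasDerivAt_id t).mul_const (inner ℝ (gradient φ x) d : ℝ)
    have h3 : HasDerivAt (fun t : ℝ => β * t ^ 2 / 2 * ‖d‖ ^ 2) (β * t * ‖d‖ ^ 2) t := by
      have : HasDerivAt (fun t : ℝ => β * t ^ 2 / 2 * ‖d‖ ^ 2) (β * (2 * t) / 2 * ‖d‖ ^ 2) t := by
        have := (((hasDerivAt_pow 2 t).const_mul β).div_const 2).mul_const (‖d‖ ^ 2)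
        norm_num at this
        convert this using 1
      convert this using 1; ring
    exact (h1.sub h2).sub h3
  have hanti : AntitoneOn g (Icc (0:ℝ) 1) := by
    apply antitoneOn_of_deriv_nonpos (convex_Icc 0 1)
    · exact Continuous.continuousOn (by
        apply Continuous.sub
        apply Continuous.sub
        · exact hφdiff.continuous.comp (by continuity)
        · continuity
        · continuity)
    · intro t _
      exact ((hderiv t).differentiableAt).differentiableWithinAt
    · intro t ht
      rw [(hderiv t).deriv]
      rw [interior_Icc] at ht
      have ht0 : 0 ≤ t := ht.1.le
      have h1 : (inner ℝ (gradient φ (x + t • d)) d : ℝ) - (inner ℝ (gradient φ x) d : ℝ)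
          = (inner ℝ (gradient φ (x + t • d) - gradient φ x) d : ℝ) := by
        rw [inner_sub_left]
      have h2 : (inner ℝ (gradient φ (x + t • d) - gradient φ x) d : ℝ) ≤ β * t * ‖d‖ ^ 2 := by
        calc (inner ℝ (gradient φ (x + t • d) - gradient φ x) d : ℝ)
            ≤ ‖gradient φ (x + t • d) - gradient φ x‖ * ‖d‖ := real_inner_le_norm _ _
          _ ≤ (β * ‖(x + t • d) - x‖) * ‖d‖ := by
              have := hφlip (x + t • d) x
              exact mul_le_mul_of_nonneg_right this (norm_nonneg d)
          _ = β * t * ‖d‖ ^ 2 := by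
              simp [norm_smul, abs_of_nonneg ht0]; ring
      linarith [h1 ▸ h2]
  have := hanti (by simp : (0:ℝ) ∈ Icc (0:ℝ) 1) (by simp : (1:ℝ) ∈ Icc (0:ℝ) 1) zero_le_one
  have hg0 : g 0 = φ x := by simp [hg]
  have hg1 : g 1 = φ y - (inner ℝ (gradient φ x) d : ℝ) - β / 2 * ‖d‖ ^ 2 := by
    simp only [hg, hd, one_smul, one_pow, one_mul, add_sub_cancel]; ring
  rw [hg0, hg1] at this
  linarith

/-- Deterministic core inequality of Lemma 3.1. -/
theorem stmt_0 {E : Type*} [NormedAddCommGroup E] [InnerProductSpace ℝ E] [CompleteSpace E]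
    (φ h f : E → ℝ) (β : ℝ) (hβ : 0 < β)
    (hφdiff : Differentiable ℝ φ)
    (hφlip : ∀ x y : E, ‖gradient φ x - gradient φ y‖ ≤ β * ‖x - y‖)
    (hconv : ConvexOn ℝ Set.univ h)
    (hf : ∀ x, f x = φ x + h x)
    (X Xt V w : E) (η δ : ℝ) (hη : η ∈ Set.Ioc (0 : ℝ) 1) (hδ : 0 ≤ δ)
    (ψ : E → ℝ)
    (hψ : ∀ U, ψ U = ‖U - X + (1 / (2 * β * η)) • w‖ ^ 2 + (1 / (β * η)) * h U)
    (hV : ψ V ≤ ψ Xt + δ)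
    (Xp : E) (hXp : Xp = (1 - η) • X + η • V) :
    f Xp ≤ (1 - η) * f X + η * (φ X + h Xt) + (1 / (2 * β)) * ‖gradient φ X - w‖ ^ 2
      + η * (inner ℝ (Xt - X) w : ℝ) + β * η ^ 2 * ‖Xt - X‖ ^ 2 + β * η ^ 2 * δ := by
  obtain ⟨hη0, hη1⟩ := hη
  have hβη : 0 < β * η := mul_pos hβ hη0
  have hne : β * η ≠ 0 := ne_of_gt hβη
  have hXpX : Xp - X = η • (V - X) := by
    rw [hXp, smul_sub, sub_smul, one_smul]; abel
  have hdec : (inner ℝ (gradient φ X) (V - X) : ℝ)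
      = (inner ℝ (gradient φ X - w) (V - X) : ℝ) + (inner ℝ (V - X) w : ℝ) := by
    rw [inner_sub_left, real_inner_comm (V - X) w]; ring
  -- smoothness
  have hsmooth : φ Xp ≤ φ X + η * ((inner ℝ (gradient φ X - w) (V - X) : ℝ)
      + (inner ℝ (V - X) w : ℝ)) + β / 2 * (η ^ 2 * ‖V - X‖ ^ 2) := by
    have h0 := descent_aux φ β hφdiff hφlip X Xp
    rw [hXpX, real_inner_smul_right, norm_smul, hdec] at h0
    calc φ Xp ≤ φ X + η * ((inner ℝ (gradient φ X - w) (V - X) : ℝ)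
        + (inner ℝ (V - X) w : ℝ)) + β / 2 * (‖η‖ * ‖V - X‖) ^ 2 := h0
      _ = _ := by rw [Real.norm_eq_abs, mul_pow, sq_abs]
  -- convexity
  have hconvh : h Xp ≤ (1 - η) * h X + η * h V := by
    have := hconv.2 (Set.mem_univ X) (Set.mem_univ V)
      (show (0:ℝ) ≤ 1 - η by linarith) hη0.le (show (1 - η) + η = 1 by ring)
    rw [hXp]; simpa using this
  -- expand ψ inequality
  have hexp : ∀ U : E, ψ U = ‖U - X‖ ^ 2 + (1 / (β * η)) * (inner ℝ (U - X) w : ℝ)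
      + (1 / (2 * β * η)) ^ 2 * ‖w‖ ^ 2 + (1 / (β * η)) * h U := by
    intro U
    rw [hψ U, norm_add_sq_real, real_inner_smul_right, norm_smul,
      Real.norm_eq_abs, mul_pow, sq_abs]
    have h1 : 2 * (1 / (2 * β * η) * (inner ℝ (U - X) w : ℝ))
        = 1 / (β * η) * (inner ℝ (U - X) w : ℝ) := by
      field_simp
    linarith [h1]
  have key : β * η * ‖V - X‖ ^ 2 + (inner ℝ (V - X) w : ℝ) + h V
      ≤ β * η * ‖Xt - X‖ ^ 2 + (inner ℝ (Xt - X) w : ℝ) + h Xt + β * η * δ := by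
    rw [hexp V, hexp Xt] at hV
    have h2 := mul_le_mul_of_nonneg_left hV hβη.le
    have cancel : ∀ t : ℝ, β * η * (1 / (β * η) * t) = t := by
      intro t; field_simp
    linarith [h2, cancel (inner ℝ (V - X) w : ℝ), cancel (h V),
      cancel (inner ℝ (Xt - X) w : ℝ), cancel (h Xt)]
  -- Young's inequality (cleared of denominators)
  have young' : 2 * (β * η) * (inner ℝ (gradient φ X - w) (V - X) : ℝ)
      ≤ ‖gradient φ X - w‖ ^ 2 + (β * η) ^ 2 * ‖V - X‖ ^ 2 := by
    have h1 := real_inner_le_norm (gradient φ X - w) (V - X)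
    nlinarith [sq_nonneg (‖gradient φ X - w‖ - β * η * ‖V - X‖),
      mul_le_mul_of_nonneg_left h1 hβη.le]
  have youngf : η * (inner ℝ (gradient φ X - w) (V - X) : ℝ)
      ≤ 1 / (2 * β) * ‖gradient φ X - w‖ ^ 2 + β * η ^ 2 / 2 * ‖V - X‖ ^ 2 := by
    have hb : (0 : ℝ) < 1 / (2 * β) := by positivity
    have h2 := mul_le_mul_of_nonneg_left young' hb.le
    have c1 : 1 / (2 * β) * (2 * (β * η) * (inner ℝ (gradient φ X - w) (V - X) : ℝ))
        = η * (inner ℝ (gradient φ X - w) (V - X) : ℝ) := by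
      field_simp
    have c2 : 1 / (2 * β) * ((β * η) ^ 2 * ‖V - X‖ ^ 2)
        = β * η ^ 2 / 2 * ‖V - X‖ ^ 2 := by
      field_simp
    linarith [h2, c1, c2]
  have keyη := mul_le_mul_of_nonneg_left key hη0.le
  rw [hf Xp, hf X]
  nlinarith [hsmooth, hconvh, keyη, youngf]
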